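/- Shishkin-type decomposition of the semidiscrete solution: in the setting of the layer-adapted derivative bounds for the semidiscrete solution, suppose û^{n+1} ∈ C^6([0,1])^M satisfies |d^k û^{n+1}_j(x)/dx^k| ≤ C₀(1 + ε^{−k/2} B_ε(x)) for 0 ≤ k ≤ 6 and all components j. Set x* = 4√(ε/β) · ln(1/√ε) and assume x* ≤ 1/4. Then there exist v̂^{n+1}, ŵ^{n+1} : [0,1] → ℝ^M with û^{n+1} = v̂^{n+1} + ŵ^{n+1}, where v̂^{n+1} equals û^{n+1} on [x*, 1−x*] and equals its degree-4 Taylor polynomials at x* and 1−x* on [0,x*] and [1−x*,1] respectively, and there is a constant C independent of ε and Δt such that for 0 ≤ m ≤ 6, every component k, and every x ∈ [0,1] \ {x*, 1−x*}: |d^m v̂^{n+1}_k(x)/dx^m| ≤ C(1 + ε^{2−m/2}) and |d^m ŵ^{n+1}_k(x)/dx^m| ≤ C ε^{−m/2} B_ε(x). -/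

import Mathlib

/-- The boundary-layer function `B_ε(x) = e^{-x√(β/ε)} + e^{-(1-x)√(β/ε)}`. -/
noncomputable def Bfun (β ε x : ℝ) : ℝ :=
  Real.exp (-x * Real.sqrt (β/ε)) + Real.exp (-(1-x) * Real.sqrt (β/ε))

open Finset

lemma iter_monomial (c : ℝ) (ν : ℕ) : ∀ (m : ℕ),
    iteratedDeriv m (fun x : ℝ => (x - c)^ν) = fun x => (ν.descFactorial m : ℝ) * (x - c)^(ν - m) := by
  intro m
  induction m with
  | zero => simp
  | succ m ih =>
    rw [iteratedDeriv_succ, ih]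
    funext x
    have hd : HasDerivAt (fun y : ℝ => (y - c)^(ν - m))
        ((ν - m : ℕ) * (x - c)^(ν - m - 1)) x := by
      simpa using ((hasDerivAt_id x).sub_const c).fun_pow (ν - m)
    rw [deriv_const_mul _ hd.differentiableAt, hd.deriv]
    by_cases h : m < ν
    · have h1 : ν - (m+1) = ν - m - 1 := by omega
      rw [Nat.descFactorial_succ, h1]
      push_cast [Nat.sub_add_cancel]
      have : ((ν - m : ℕ) : ℝ) = (ν : ℝ) - m := by
        push_cast [Nat.cast_sub h.le]; ring
      rw [this]; ring
    · have h1 : ν - m = 0 := by omega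
      have h2 : ν.descFactorial (m+1) = 0 := Nat.descFactorial_eq_zero_iff_lt.mpr (by omega)
      simp [h1, h2]

lemma iter_poly (c : ℝ) (e : ℕ → ℝ) : ∀ (m : ℕ),
    iteratedDeriv m (fun x : ℝ => ∑ ν ∈ Finset.range 5, e ν * (x - c)^ν)
      = fun x => ∑ ν ∈ Finset.range 5, e ν * (ν.descFactorial m : ℝ) * (x - c)^(ν - m) := by
  intro m
  induction m with
  | zero => simp [mul_comm]
  | succ m ih =>
    rw [iteratedDeriv_succ, ih]
    funext x
    have hd : ∀ ν ∈ Finset.range 5, HasDerivAt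
        (fun y : ℝ => e ν * (ν.descFactorial m : ℝ) * (y - c)^(ν - m))
        (e ν * (ν.descFactorial m : ℝ) * ((ν - m : ℕ) * (x - c)^(ν - m - 1))) x := by
      intro ν _
      have base : HasDerivAt (fun y : ℝ => (y - c)^(ν - m)) ((ν - m : ℕ) * (x - c)^(ν - m - 1)) x := by
        simpa using ((hasDerivAt_id x).sub_const c).fun_pow (ν - m)
      exact base.const_mul _
    rw [(HasDerivAt.fun_sum hd).deriv]
    refine Finset.sum_congr rfl fun ν hν => ?_
    by_cases h : m < ν
    · have h1 : ν - (m+1) = ν - m - 1 := by omega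
      rw [Nat.descFactorial_succ, h1]
      have : ((ν - m : ℕ) : ℝ) = (ν : ℝ) - m := by push_cast [Nat.cast_sub h.le]; ring
      push_cast
      rw [this]; ring
    · have h1 : ν - m = 0 := by omega
      have h2 : ν.descFactorial (m+1) = 0 := Nat.descFactorial_eq_zero_iff_lt.mpr (by omega)
      simp [h1, h2]

lemma poly_contDiff (c : ℝ) (e : ℕ → ℝ) (n : ℕ∞) :
    ContDiff ℝ n (fun x : ℝ => ∑ ν ∈ Finset.range 5, e ν * (x - c)^ν) :=
  ContDiff.sum fun ν _ => contDiff_const.mul ((contDiff_id.sub contDiff_const).pow ν)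

lemma iter_comp_const_sub (m : ℕ) (F : ℝ → ℝ) (c x : ℝ) :
    iteratedDeriv m (fun y => F (c - y)) x = (-1:ℝ)^m * iteratedDeriv m F (c - x) := by
  have h1 : iteratedDeriv m (fun y : ℝ => F (c - y)) x
      = (-1:ℝ)^m • iteratedDeriv m (fun z => F (c + z)) (-x) := by
    have := iteratedDeriv_comp_neg m (fun z => F (c + z)) x
    simpa [sub_eq_add_neg] using this
  rw [h1, iteratedDeriv_comp_const_add, smul_eq_mul]
  norm_num [← sub_eq_add_neg]

lemma integral_exp_neg_mul (s : ℝ) (x y : ℝ) (hs : 0 < s) :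
    ∫ t in x..y, Real.exp (-(s*t)) = (Real.exp (-(s*x)) - Real.exp (-(s*y)))/s := by
  have key : ∀ t : ℝ, HasDerivAt (fun u : ℝ => -(Real.exp (-(s*u)))/s) (Real.exp (-(s*t))) t := by
    intro t
    have h1 : HasDerivAt (fun u : ℝ => -(s*u)) (-s) t := by
      simpa using ((hasDerivAt_id t).const_mul s).fun_neg
    have h3 := (h1.exp.fun_neg).div_const s
    refine h3.congr_deriv ?_
    field_simp
  rw [intervalIntegral.integral_eq_sub_of_hasDerivAt (fun t _ => key t)
    (Continuous.intervalIntegrable (by fun_prop) x y)]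
  ring

lemma poly_deriv_bound (c : ℝ) (e : ℕ → ℝ) (D : ℝ) (hD : ∀ ν, ν < 5 → |e ν| ≤ D)
    (m : ℕ) (x : ℝ) (hx : |x - c| ≤ 1) :
    |iteratedDeriv m (fun y : ℝ => ∑ ν ∈ Finset.range 5, e ν * (y - c)^ν) x| ≤ 120 * D := by
  have hD0 : 0 ≤ D := le_trans (abs_nonneg _) (hD 0 (by norm_num))
  rw [iter_poly]
  calc |∑ ν ∈ Finset.range 5, e ν * (ν.descFactorial m : ℝ) * (x - c)^(ν - m)|
      ≤ ∑ ν ∈ Finset.range 5, |e ν * (ν.descFactorial m : ℝ) * (x - c)^(ν - m)| :=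
        Finset.abs_sum_le_sum_abs _ _
    _ ≤ ∑ _ν ∈ Finset.range 5, 24 * D := by
        refine Finset.sum_le_sum fun ν hν => ?_
        have hν5 : ν < 5 := Finset.mem_range.mp hν
        have hdesc : (ν.descFactorial m : ℝ) ≤ 24 := by
          have : ν.descFactorial m ≤ 24 := by
            rcases le_or_gt m ν with hm | hm
            · interval_cases ν <;> interval_cases m <;> decide
            · simp [Nat.descFactorial_eq_zero_iff_lt.mpr hm]
          exact_mod_cast this
        have hpow : |x - c|^(ν - m) ≤ 1 := pow_le_one₀ (abs_nonneg _) hx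
        rw [abs_mul, abs_mul, abs_pow]
        calc |e ν| * |(ν.descFactorial m : ℝ)| * |x - c|^(ν - m)
            ≤ D * 24 * 1 := by
              refine mul_le_mul (mul_le_mul (hD ν hν5) ?_ (abs_nonneg _) hD0) hpow
                (by positivity) (by positivity)
              rw [abs_of_nonneg (by positivity)]; exact hdesc
          _ = 24 * D := by ring
    _ = 120 * D := by simp [Finset.sum_const]; ring

lemma taylor_layer (f : ℝ → ℝ) (hf : ContDiff ℝ 6 f) (a s A : ℝ) (hs : 0 < s) (hA : 0 ≤ A)
    (h5 : ∀ t ∈ Set.Icc (0:ℝ) a, |iteratedDeriv 5 f t| ≤ A * Real.exp (-(s * t))) :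
    ∀ (i m : ℕ), m + i = 5 → ∀ x ∈ Set.Icc (0:ℝ) a,
      |iteratedDeriv m (fun y => f y - ∑ ν ∈ Finset.range 5,
          (iteratedDeriv ν f a / ν.factorial) * (y - a)^ν) x|
        ≤ A * (1/s)^i * Real.exp (-(s * x)) := by
  intro i
  induction i with
  | zero =>
    intro m hm x hx
    have hm5 : m = 5 := by omega
    subst hm5
    have hsub : iteratedDeriv 5 (fun y => f y - ∑ ν ∈ Finset.range 5,
        (iteratedDeriv ν f a / ν.factorial) * (y - a)^ν) x
        = iteratedDeriv 5 f x - iteratedDeriv 5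
            (fun y => ∑ ν ∈ Finset.range 5, (iteratedDeriv ν f a / ν.factorial) * (y - a)^ν) x := by
      have := iteratedDerivWithin_sub (n := 5) (Set.mem_univ x) uniqueDiffOn_univ
        (hf.of_le (by exact_mod_cast (by norm_num : (5:ℕ) ≤ 6))).contDiffWithinAt
        (poly_contDiff a (fun ν => iteratedDeriv ν f a / ν.factorial) 5).contDiffWithinAt
      simpa [iteratedDerivWithin_univ, Pi.sub_def] using this
    have hpoly : iteratedDeriv 5 (fun y : ℝ => ∑ ν ∈ Finset.range 5,
        (iteratedDeriv ν f a / ν.factorial) * (y - a)^ν) x = 0 := by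
      rw [iter_poly]
      refine Finset.sum_eq_zero fun ν hν => ?_
      have h0 : ν.descFactorial 5 = 0 :=
        Nat.descFactorial_eq_zero_iff_lt.mpr (Finset.mem_range.mp hν)
      simp only [h0, Nat.cast_zero, mul_zero, zero_mul]
    rw [hsub, hpoly, sub_zero, pow_zero]
    simpa using h5 x hx
  | succ i IH =>
    intro m hm x hx
    set W : ℝ → ℝ := fun y => f y - ∑ ν ∈ Finset.range 5,
        (iteratedDeriv ν f a / ν.factorial) * (y - a)^ν with hW
    have hWc : ContDiff ℝ 6 W := hf.sub (poly_contDiff a _ 6)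
    have hm4 : m ≤ 4 := by omega
    have hcont : Continuous (iteratedDeriv (m+1) W) :=
      hWc.continuous_iteratedDeriv (m+1) (by exact_mod_cast (by omega : m + 1 ≤ 6))
    have hderiv : ∀ t : ℝ, HasDerivAt (iteratedDeriv m W) (iteratedDeriv (m+1) W t) t := by
      intro t
      have hd : DifferentiableAt ℝ (iteratedDeriv m W) t :=
        (hWc.differentiable_iteratedDeriv m (by exact_mod_cast (by omega : m < 6))).differentiableAt
      rw [iteratedDeriv_succ]
      exact hd.hasDerivAt
    have hWa : iteratedDeriv m W a = 0 := by
      have hsub : iteratedDeriv m W a = iteratedDeriv m f a - iteratedDeriv m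
          (fun y => ∑ ν ∈ Finset.range 5, (iteratedDeriv ν f a / ν.factorial) * (y - a)^ν) a := by
        have := iteratedDerivWithin_sub (n := m) (Set.mem_univ a) uniqueDiffOn_univ
          (hf.of_le (by exact_mod_cast (by omega : m ≤ 6))).contDiffWithinAt
          (poly_contDiff a (fun ν => iteratedDeriv ν f a / ν.factorial) m).contDiffWithinAt
        simpa [iteratedDerivWithin_univ, Pi.sub_def] using this
      have hpoly : iteratedDeriv m
          (fun y : ℝ => ∑ ν ∈ Finset.range 5, (iteratedDeriv ν f a / ν.factorial) * (y - a)^ν) a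
          = iteratedDeriv m f a := by
        rw [iter_poly]
        show (∑ ν ∈ Finset.range 5,
            iteratedDeriv ν f a / ν.factorial * (ν.descFactorial m : ℝ) * (a - a)^(ν - m))
          = iteratedDeriv m f a
        rw [Finset.sum_eq_single_of_mem m (Finset.mem_range.mpr (by omega))]
        · rw [Nat.descFactorial_self, Nat.sub_self, pow_zero, mul_one,
            div_mul_cancel₀ _ (by exact_mod_cast m.factorial_ne_zero : ((m.factorial : ℝ)) ≠ 0)]
        · intro ν hν hνm
          rcases lt_or_gt_of_ne hνm with h | h
          · simp [Nat.descFactorial_eq_zero_iff_lt.mpr h]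
          · rw [sub_self, zero_pow (by omega : ν - m ≠ 0), mul_zero]
      rw [hsub, hpoly, sub_self]
    have hxa : x ≤ a := hx.2
    have hx0 : 0 ≤ x := hx.1
    have hftc : ∫ t in x..a, iteratedDeriv (m+1) W t
        = iteratedDeriv m W a - iteratedDeriv m W x :=
      intervalIntegral.integral_eq_sub_of_hasDerivAt (fun t _ => hderiv t)
        (hcont.intervalIntegrable x a)
    have habs : |iteratedDeriv m W x| = |∫ t in x..a, iteratedDeriv (m+1) W t| := by
      rw [hftc, hWa, zero_sub, abs_neg]
    rw [habs]
    have hbd : ∀ t ∈ Set.Icc x a, |iteratedDeriv (m+1) W t|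
        ≤ A * (1/s)^i * Real.exp (-(s * t)) := fun t ht =>
      IH (m+1) (by omega) t ⟨le_trans hx0 ht.1, ht.2⟩
    calc |∫ t in x..a, iteratedDeriv (m+1) W t|
        ≤ ∫ t in x..a, |iteratedDeriv (m+1) W t| := by
          simpa [Real.norm_eq_abs] using
            intervalIntegral.norm_integral_le_integral_norm (f := iteratedDeriv (m+1) W)
              (μ := MeasureTheory.volume) (a := x) (b := a) hxa
      _ ≤ ∫ t in x..a, A * (1/s)^i * Real.exp (-(s * t)) := by
          refine intervalIntegral.integral_mono_on hxa
            (hcont.abs.intervalIntegrable x a)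
            (Continuous.intervalIntegrable (by fun_prop) x a) hbd
      _ = A * (1/s)^i * ((Real.exp (-(s*x)) - Real.exp (-(s*a)))/s) := by
          rw [intervalIntegral.integral_const_mul, integral_exp_neg_mul s x a hs]
      _ ≤ A * (1/s)^i * (Real.exp (-(s*x))/s) := by
          have h1 : (Real.exp (-(s*x)) - Real.exp (-(s*a)))/s ≤ Real.exp (-(s*x))/s :=
            (div_le_div_iff_of_pos_right hs).mpr (by linarith [Real.exp_pos (-(s*a))])
          exact mul_le_mul_of_nonneg_left h1 (by positivity)
      _ = A * (1/s)^(i+1) * Real.exp (-(s*x)) := by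
          rw [pow_succ]; ring

lemma iter_zero_fun (m : ℕ) : iteratedDeriv m (fun _ : ℝ => (0:ℝ)) = fun _ => 0 := by
  induction m with
  | zero => simp [iteratedDeriv_zero]
  | succ n ih => rw [iteratedDeriv_succ, ih]; simp

lemma iter_sub6 (f g : ℝ → ℝ) (m : ℕ) (hf : ContDiff ℝ 6 f) (hg : ContDiff ℝ 6 g)
    (hm : m ≤ 6) (x : ℝ) :
    iteratedDeriv m (fun y => f y - g y) x = iteratedDeriv m f x - iteratedDeriv m g x := by
  have := iteratedDerivWithin_sub (n := m) (Set.mem_univ x) uniqueDiffOn_univ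
    (hf.of_le (by exact_mod_cast hm)).contDiffWithinAt (hg.of_le (by exact_mod_cast hm)).contDiffWithinAt
  simpa [iteratedDerivWithin_univ, Pi.sub_def] using this

set_option maxHeartbeats 1600000 in
/-- Shishkin-type decomposition `û^{n+1} = v̂^{n+1} + ŵ^{n+1}` of the semidiscrete
solution into a regular part (degree-4 Taylor polynomials near the boundary,
`û^{n+1}` itself in the interior) and a layer part, with ε-uniform bounds. -/
theorem stmt_9
    (M : ℕ) (hM : 2 ≤ M)
    (βs β : ℝ) (hβ : β ∈ Set.Ioo (0:ℝ) βs)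
    (C₀ : ℝ) (hC₀ : 0 < C₀) :
    ∃ C : ℝ, ∀ ε ∈ Set.Ioc (0:ℝ) 1, ∀ Δt : ℝ, 0 < Δt →
    ∀ uhat : ℝ → Fin M → ℝ,
      (∀ j, ContDiff ℝ 6 (fun x => uhat x j)) →
      (∀ k : ℕ, k ≤ 6 → ∀ j, ∀ x ∈ Set.Icc (0:ℝ) 1,
        |iteratedDeriv k (fun z => uhat z j) x|
          ≤ C₀ * (1 + ε ^ (-(k:ℝ)/2) * Bfun β ε x)) →
      4 * Real.sqrt (ε/β) * Real.log (1/Real.sqrt ε) ≤ 1/4 →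
      ∃ vhat what : ℝ → Fin M → ℝ,
        (∀ x j, uhat x j = vhat x j + what x j) ∧
        (∀ j, ∀ x ∈ Set.Icc (0:ℝ) (4 * Real.sqrt (ε/β) * Real.log (1/Real.sqrt ε)),
          vhat x j = ∑ ν ∈ Finset.range 5,
            (x - 4 * Real.sqrt (ε/β) * Real.log (1/Real.sqrt ε))^ν / (ν.factorial : ℝ)
              * iteratedDeriv ν (fun z => uhat z j)
                  (4 * Real.sqrt (ε/β) * Real.log (1/Real.sqrt ε))) ∧
        (∀ j, ∀ x ∈ Set.Icc (4 * Real.sqrt (ε/β) * Real.log (1/Real.sqrt ε))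
            (1 - 4 * Real.sqrt (ε/β) * Real.log (1/Real.sqrt ε)),
          vhat x j = uhat x j) ∧
        (∀ j, ∀ x ∈ Set.Icc (1 - 4 * Real.sqrt (ε/β) * Real.log (1/Real.sqrt ε)) (1:ℝ),
          vhat x j = ∑ ν ∈ Finset.range 5,
            (x - (1 - 4 * Real.sqrt (ε/β) * Real.log (1/Real.sqrt ε)))^ν / (ν.factorial : ℝ)
              * iteratedDeriv ν (fun z => uhat z j)
                  (1 - 4 * Real.sqrt (ε/β) * Real.log (1/Real.sqrt ε))) ∧
        (∀ m : ℕ, m ≤ 6 → ∀ j, ∀ x ∈ Set.Icc (0:ℝ) 1,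
          x ≠ 4 * Real.sqrt (ε/β) * Real.log (1/Real.sqrt ε) →
          x ≠ 1 - 4 * Real.sqrt (ε/β) * Real.log (1/Real.sqrt ε) →
          |iteratedDeriv m (fun z => vhat z j) x| ≤ C * (1 + ε ^ ((2:ℝ) - (m:ℝ)/2)) ∧
          |iteratedDeriv m (fun z => what z j) x| ≤ C * ε ^ (-(m:ℝ)/2) * Bfun β ε x) := by
  obtain ⟨hβ0, -⟩ := hβ
  set K : ℝ := (1 + 1/Real.sqrt β)^5 with hK_def
  have hsb0 : (0:ℝ) ≤ 1/Real.sqrt β := by positivity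
  have hK1 : (1:ℝ) ≤ K := by
    rw [hK_def]
    calc (1:ℝ) = 1^5 := by norm_num
      _ ≤ (1 + 1/Real.sqrt β)^5 := pow_le_pow_left₀ (by norm_num) (by linarith) 5
  have hK0 : (0:ℝ) < K := lt_of_lt_of_le one_pos hK1
  refine ⟨400 * C₀ * K, ?_⟩
  intro ε hε Δt hΔt uhat hu hubd hstar
  obtain ⟨hε0, hε1⟩ := hε
  have hεne : ε ≠ 0 := hε0.ne'
  have hβne : β ≠ 0 := hβ0.ne'
  set s : ℝ := Real.sqrt (β/ε) with hs_def
  set a : ℝ := 4 * Real.sqrt (ε/β) * Real.log (1/Real.sqrt ε) with ha_def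
  set b : ℝ := 1 - a with hb_def
  have hs0 : 0 < s := by rw [hs_def]; exact Real.sqrt_pos.mpr (div_pos hβ0 hε0)
  have hrpos : ∀ y : ℝ, 0 < ε ^ y := fun y => Real.rpow_pos_of_pos hε0 y
  have hmono_exp : ∀ {y z : ℝ}, y ≤ z → ε ^ z ≤ ε ^ y := fun h =>
    Real.rpow_le_rpow_of_exponent_ge hε0 hε1 h
  have hsβ : Real.sqrt (ε/β) * s = 1 := by
    rw [hs_def, ← Real.sqrt_mul (div_nonneg hε0.le hβ0.le)]
    rw [show ε/β*(β/ε) = 1 by field_simp]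
    exact Real.sqrt_one
  have hL : Real.log (1/Real.sqrt ε) = -(Real.log ε)/2 := by
    rw [one_div, Real.log_inv, Real.log_sqrt hε0.le]
    ring
  have hsa : s * a = -(2 * Real.log ε) := by
    rw [ha_def, hL]
    rw [show s * (4 * Real.sqrt (ε/β) * (-(Real.log ε)/2))
        = (Real.sqrt (ε/β) * s) * (-2 * Real.log ε) by ring, hsβ]
    ring
  have hEa : Real.exp (-(s*a)) = ε ^ (2:ℝ) := by
    rw [hsa, neg_neg, Real.rpow_def_of_pos hε0]
    ring_nf
  have hsqε1 : Real.sqrt ε ≤ 1 := by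
    rw [show (1:ℝ) = Real.sqrt 1 by simp]
    exact Real.sqrt_le_sqrt hε1
  have hL0 : 0 ≤ Real.log (1/Real.sqrt ε) := Real.log_nonneg (by
    rw [le_div_iff₀ (Real.sqrt_pos.mpr hε0)]; simpa using hsqε1)
  have ha0 : 0 ≤ a := by
    rw [ha_def]
    exact mul_nonneg (by positivity) hL0
  have ha14 : a ≤ 1/4 := hstar
  have hab : a ≤ b := by rw [hb_def]; linarith
  have hexp_mono : ∀ {y z : ℝ}, y ≤ z → Real.exp (-(s*z)) ≤ Real.exp (-(s*y)) := by
    intro y z h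
    exact Real.exp_le_exp.mpr (neg_le_neg (mul_le_mul_of_nonneg_left h hs0.le))
  have hBfun : ∀ y : ℝ, Bfun β ε y = Real.exp (-(s*y)) + Real.exp (-(s*(1-y))) := by
    intro y
    have e1 : -y * Real.sqrt (β/ε) = -(s*y) := by rw [← hs_def]; ring
    have e2 : -(1-y) * Real.sqrt (β/ε) = -(s*(1-y)) := by rw [← hs_def]; ring
    unfold Bfun
    rw [e1, e2]
  have hB_pos : ∀ y : ℝ, 0 < Bfun β ε y := fun y => by
    rw [hBfun]; positivity
  have hB_lower1 : ∀ y : ℝ, Real.exp (-(s*y)) ≤ Bfun β ε y := fun y => by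
    rw [hBfun]; linarith [Real.exp_pos (-(s*(1-y)))]
  have hB_lower2 : ∀ y : ℝ, Real.exp (-(s*(1-y))) ≤ Bfun β ε y := fun y => by
    rw [hBfun]; linarith [Real.exp_pos (-(s*y))]
  have hB_upper : ∀ y : ℝ, y ≤ 1/2 → Bfun β ε y ≤ 2 * Real.exp (-(s*y)) := by
    intro y hy
    rw [hBfun]
    linarith [hexp_mono (show y ≤ 1 - y by linarith)]
  have hBsym : ∀ y : ℝ, Bfun β ε (1-y) = Bfun β ε y := by
    intro y
    rw [hBfun, hBfun, show (1:ℝ) - (1-y) = y by ring]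
    ring
  have honeB : ∀ x : ℝ, (x ≤ a ∨ 1 - x ≤ a) → 1 ≤ ε ^ (-(2:ℝ)) * Bfun β ε x := by
    intro x hx
    have hBge : ε ^ (2:ℝ) ≤ Bfun β ε x := by
      rcases hx with h | h
      · exact le_trans (by rw [← hEa]; exact hexp_mono h) (hB_lower1 x)
      · exact le_trans (by rw [← hEa]; exact hexp_mono h) (hB_lower2 x)
    calc (1:ℝ) = ε ^ (-(2:ℝ)) * ε ^ (2:ℝ) := by rw [← Real.rpow_add hε0]; norm_num
      _ ≤ _ := mul_le_mul_of_nonneg_left hBge (hrpos _).le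
  have hBa : Bfun β ε a ≤ 2 * ε ^ (2:ℝ) := by
    rw [hBfun, hEa]
    have e2 : Real.exp (-(s*(1-a))) ≤ ε^(2:ℝ) := by
      rw [← hEa]; exact hexp_mono (by linarith)
    linarith
  have hBb : Bfun β ε b ≤ 2 * ε ^ (2:ℝ) := by
    rw [hb_def, hBsym a]
    exact hBa
  have hcoef : ∀ (c : ℝ), c ∈ Set.Icc (0:ℝ) 1 → Bfun β ε c ≤ 2 * ε ^ (2:ℝ) → ∀ (j : Fin M),
      ∀ ν, ν < 5 → |iteratedDeriv ν (fun z => uhat z j) c / (ν.factorial : ℝ)| ≤ 3 * C₀ := by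
    intro c hc hBc j ν hν
    have hfac : (1:ℝ) ≤ (ν.factorial : ℝ) := by exact_mod_cast ν.factorial_pos
    have h1 : |iteratedDeriv ν (fun z => uhat z j) c / (ν.factorial : ℝ)|
        ≤ |iteratedDeriv ν (fun z => uhat z j) c| := by
      rw [abs_div, abs_of_nonneg (by positivity : (0:ℝ) ≤ (ν.factorial:ℝ))]
      exact div_le_self (abs_nonneg _) hfac
    have h2 := hubd ν (by omega) j c hc
    have h3 : ε ^ (-(ν:ℝ)/2) * Bfun β ε c ≤ 2 * ε ^ ((2:ℝ) - (ν:ℝ)/2) := by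
      calc ε ^ (-(ν:ℝ)/2) * Bfun β ε c ≤ ε ^ (-(ν:ℝ)/2) * (2 * ε ^ (2:ℝ)) :=
            mul_le_mul_of_nonneg_left hBc (hrpos _).le
        _ = 2 * ε ^ ((2:ℝ) - (ν:ℝ)/2) := by
            rw [show ε ^ (-(ν:ℝ)/2) * (2 * ε ^ (2:ℝ)) = 2*(ε ^ (-(ν:ℝ)/2) * ε ^ (2:ℝ)) by ring,
              ← Real.rpow_add hε0, show -(ν:ℝ)/2 + 2 = (2:ℝ) - (ν:ℝ)/2 by ring]
    have h4 : ε ^ ((2:ℝ) - (ν:ℝ)/2) ≤ 1 := Real.rpow_le_one hε0.le hε1 (by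
      have : (ν:ℝ) ≤ 4 := by exact_mod_cast Nat.lt_succ_iff.mp hν
      linarith)
    nlinarith [h1.trans h2, hC₀.le]
  have hA0 : (0:ℝ) ≤ 3 * C₀ * ε ^ (-(5:ℝ)/2) := by positivity
  have hstep : ∀ t ∈ Set.Icc (0:ℝ) a, C₀ * (1 + ε ^ (-(5:ℝ)/2) * Bfun β ε t)
      ≤ (3 * C₀ * ε ^ (-(5:ℝ)/2)) * Real.exp (-(s*t)) := by
    intro t ht
    have hE : Real.exp (-(s*a)) ≤ Real.exp (-(s*t)) := hexp_mono ht.2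
    have h1 : 1 ≤ ε ^ (-(2:ℝ)) * Real.exp (-(s*t)) := by
      calc (1:ℝ) = ε ^ (-(2:ℝ)) * ε ^ (2:ℝ) := by rw [← Real.rpow_add hε0]; norm_num
        _ ≤ ε ^ (-(2:ℝ)) * Real.exp (-(s*t)) := by
            rw [← hEa]; exact mul_le_mul_of_nonneg_left hE (hrpos _).le
    have h2 : Bfun β ε t ≤ 2 * Real.exp (-(s*t)) := hB_upper t (by linarith [ht.2])
    have h3 : ε ^ (-(2:ℝ)) ≤ ε ^ (-(5:ℝ)/2) := hmono_exp (by norm_num)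
    have he : (0:ℝ) < Real.exp (-(s*t)) := Real.exp_pos _
    have h5 : 1 ≤ ε ^ (-(5:ℝ)/2) * Real.exp (-(s*t)) :=
      le_trans h1 (mul_le_mul_of_nonneg_right h3 he.le)
    have h4 : ε ^ (-(5:ℝ)/2) * Bfun β ε t ≤ ε ^ (-(5:ℝ)/2) * (2*Real.exp (-(s*t))) :=
      mul_le_mul_of_nonneg_left h2 (hrpos _).le
    nlinarith [hC₀.le, mul_le_mul_of_nonneg_left h5 hC₀.le, mul_le_mul_of_nonneg_left h4 hC₀.le]
  have h5left : ∀ (j : Fin M), ∀ t ∈ Set.Icc (0:ℝ) a, |iteratedDeriv 5 (fun z => uhat z j) t|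
      ≤ (3 * C₀ * ε ^ (-(5:ℝ)/2)) * Real.exp (-(s*t)) := by
    intro j t ht
    have h := hubd 5 (by norm_num) j t ⟨ht.1, by linarith [ht.2]⟩
    push_cast at h
    exact h.trans (hstep t ht)
  have hs_inv : 1/s = Real.sqrt ε * (Real.sqrt β)⁻¹ := by
    rw [hs_def, one_div, ← Real.sqrt_inv, show (β/ε)⁻¹ = ε * β⁻¹ by field_simp,
      Real.sqrt_mul hε0.le, Real.sqrt_inv]
  have hpowi : ∀ i : ℕ, i ≤ 5 → (1/s)^i ≤ ε ^ ((i:ℝ)/2) * K := by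
    intro i hi
    rw [hs_inv, mul_pow]
    have h1 : (Real.sqrt ε)^i = ε ^ ((i:ℝ)/2) := by
      rw [← Real.rpow_natCast (Real.sqrt ε) i, Real.sqrt_eq_rpow, ← Real.rpow_mul hε0.le,
        show 1/2*(i:ℝ) = (i:ℝ)/2 by ring]
    have h2 : ((Real.sqrt β)⁻¹)^i ≤ K := by
      calc ((Real.sqrt β)⁻¹)^i ≤ (1 + 1/Real.sqrt β)^i :=
            pow_le_pow_left₀ (by positivity) (by rw [one_div]; linarith) i
        _ ≤ K := by
            rw [hK_def]
            exact pow_le_pow_right₀ (by linarith) hi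
    rw [h1]
    exact mul_le_mul_of_nonneg_left h2 (hrpos _).le
  have hwfinal : ∀ (m : ℕ), m ≤ 5 → ∀ (z : ℝ),
      (3*C₀*ε^(-(5:ℝ)/2)) * (1/s)^(5-m) * Real.exp (-(s*z))
        ≤ (3*C₀*K) * (ε ^ (-(m:ℝ)/2) * Real.exp (-(s*z))) := by
    intro m hm z
    have h1 : (1/s)^(5-m) ≤ ε ^ (((5-m:ℕ):ℝ)/2) * K := hpowi _ (by omega)
    have hc : ((5-m:ℕ):ℝ) = 5 - (m:ℝ) := by
      have := Nat.cast_sub hm (R := ℝ)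
      simpa using this
    have he : (0:ℝ) < Real.exp (-(s*z)) := Real.exp_pos _
    calc (3*C₀*ε^(-(5:ℝ)/2)) * (1/s)^(5-m) * Real.exp (-(s*z))
        ≤ (3*C₀*ε^(-(5:ℝ)/2)) * (ε ^ (((5-m:ℕ):ℝ)/2) * K) * Real.exp (-(s*z)) := by
          exact mul_le_mul_of_nonneg_right (mul_le_mul_of_nonneg_left h1 hA0) he.le
      _ = (3*C₀*K) * ((ε^(-(5:ℝ)/2) * ε ^ (((5-m:ℕ):ℝ)/2)) * Real.exp (-(s*z))) := by ring
      _ = (3*C₀*K) * (ε ^ (-(m:ℝ)/2) * Real.exp (-(s*z))) := by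
          rw [← Real.rpow_add hε0, hc, show -(5:ℝ)/2 + (5 - (m:ℝ))/2 = -(m:ℝ)/2 by ring]
  have hwtail : ∀ (m : ℕ) (w x : ℝ), Real.exp (-(s*w)) ≤ Bfun β ε x →
      (3*C₀*K) * (ε ^ (-(m:ℝ)/2) * Real.exp (-(s*w)))
        ≤ 400*C₀*K * ε ^ (-(m:ℝ)/2) * Bfun β ε x := by
    intro m w x hEB
    have h1 : (3*C₀*K) * (ε ^ (-(m:ℝ)/2) * Real.exp (-(s*w)))
        ≤ (3*C₀*K) * (ε ^ (-(m:ℝ)/2) * Bfun β ε x) :=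
      mul_le_mul_of_nonneg_left (mul_le_mul_of_nonneg_left hEB (hrpos _).le) (by positivity)
    have h2 : (3*C₀*K) * (ε ^ (-(m:ℝ)/2) * Bfun β ε x)
        ≤ (400*C₀*K) * (ε ^ (-(m:ℝ)/2) * Bfun β ε x) := by
      refine mul_le_mul_of_nonneg_right ?_ (mul_nonneg (hrpos _).le (hB_pos x).le)
      nlinarith [mul_nonneg hC₀.le hK0.le]
    calc _ ≤ (3*C₀*K) * (ε ^ (-(m:ℝ)/2) * Bfun β ε x) := h1
      _ ≤ (400*C₀*K) * (ε ^ (-(m:ℝ)/2) * Bfun β ε x) := h2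
      _ = 400*C₀*K * ε ^ (-(m:ℝ)/2) * Bfun β ε x := by ring
  -- the decomposition
  set Pa : Fin M → ℝ → ℝ := fun j y => ∑ ν ∈ Finset.range 5,
      (y - a)^ν / (ν.factorial : ℝ) * iteratedDeriv ν (fun z => uhat z j) a with hPa_def
  set Pb : Fin M → ℝ → ℝ := fun j y => ∑ ν ∈ Finset.range 5,
      (y - b)^ν / (ν.factorial : ℝ) * iteratedDeriv ν (fun z => uhat z j) b with hPb_def
  set V : ℝ → Fin M → ℝ := fun y j => if y < a then Pa j y else if y ≤ b then uhat y j else Pb j y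
    with hV_def
  set Wt : ℝ → Fin M → ℝ := fun y j => uhat y j - V y j with hWt_def
  have hTayc : ∀ (c : ℝ) (j : Fin M), (∑ ν ∈ Finset.range 5,
      (c - c)^ν/(ν.factorial:ℝ) * iteratedDeriv ν (fun z => uhat z j) c) = uhat c j := by
    intro c j
    rw [Finset.sum_eq_single_of_mem 0 (Finset.mem_range.mpr (by norm_num))]
    · simp [iteratedDeriv_zero]
    · intro ν _ hν
      rw [sub_self, zero_pow hν, zero_div, zero_mul]
  have hPaform : ∀ j : Fin M, (fun y => Pa j y) = fun y => ∑ ν ∈ Finset.range 5,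
      (iteratedDeriv ν (fun z => uhat z j) a / (ν.factorial:ℝ)) * (y - a)^ν := by
    intro j; funext y; simp only [hPa_def]
    exact Finset.sum_congr rfl fun ν _ => by ring
  have hPbform : ∀ j : Fin M, (fun y => Pb j y) = fun y => ∑ ν ∈ Finset.range 5,
      (iteratedDeriv ν (fun z => uhat z j) b / (ν.factorial:ℝ)) * (y - b)^ν := by
    intro j; funext y; simp only [hPb_def]
    exact Finset.sum_congr rfl fun ν _ => by ring
  have hPac : ∀ j : Fin M, ContDiff ℝ 6 (fun y => Pa j y) := by
    intro j; rw [hPaform j]; exact poly_contDiff _ _ _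
  have hPbc : ∀ j : Fin M, ContDiff ℝ 6 (fun y => Pb j y) := by
    intro j; rw [hPbform j]; exact poly_contDiff _ _ _
  refine ⟨V, Wt, ?_, ?_, ?_, ?_, ?_⟩
  · intro x j
    simp only [hWt_def]
    ring
  · -- left Taylor region
    intro j x hx
    rcases lt_or_eq_of_le hx.2 with hlt | heq
    · simp only [hV_def]
      rw [if_pos hlt, hPa_def]
    · subst heq
      simp only [hV_def]
      rw [if_neg (lt_irrefl _), if_pos hab, ← hTayc a j]
  · -- interior region
    intro j x hx
    simp only [hV_def]
    rw [if_neg (not_lt.mpr hx.1), if_pos hx.2]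
  · -- right Taylor region
    intro j x hx
    rcases lt_or_eq_of_le hx.1 with hlt | heq
    · simp only [hV_def]
      rw [if_neg (not_lt.mpr (le_trans hab hlt.le)), if_neg (not_le.mpr hlt), hPb_def]
    · rw [← heq]
      simp only [hV_def]
      rw [if_neg (not_lt.mpr hab), if_pos le_rfl, ← hTayc b j]
  · -- the bounds
    intro m hm j x hx hne1 hne2
    have hvgen : ∀ (c : ℝ) (P : ℝ → ℝ), Bfun β ε c ≤ 2 * ε ^ (2:ℝ) → c ∈ Set.Icc (0:ℝ) 1 →
        |x - c| ≤ 1 →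
        (P = fun y => ∑ ν ∈ Finset.range 5,
          (iteratedDeriv ν (fun z => uhat z j) c / (ν.factorial:ℝ)) * (y - c)^ν) →
        |iteratedDeriv m P x| ≤ 400*C₀*K * (1 + ε ^ ((2:ℝ) - (m:ℝ)/2)) := by
      intro c P hBc hc hxc hPform
      rw [hPform]
      have hb1 := poly_deriv_bound c _ (3*C₀) (fun ν hν => hcoef c hc hBc j ν hν) m x hxc
      refine hb1.trans ?_
      have h1 : (0:ℝ) ≤ ε ^ ((2:ℝ) - (m:ℝ)/2) := (hrpos _).le
      nlinarith [hK1, hC₀.le, mul_nonneg hC₀.le hK0.le]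
    rcases lt_trichotomy x a with hxa | hxa | hxa
    · -- left layer region
      have hmem : Set.Iio a ∈ nhds x := Iio_mem_nhds hxa
      have heqv : iteratedDeriv m (fun z => V z j) x = iteratedDeriv m (fun y => Pa j y) x := by
        refine Filter.EventuallyEq.iteratedDeriv_eq m ?_
        filter_upwards [hmem] with y hy
        simp only [hV_def]
        rw [if_pos (show y < a from hy)]
      have heqw : iteratedDeriv m (fun z => Wt z j) x
          = iteratedDeriv m (fun y => uhat y j - Pa j y) x := by
        refine Filter.EventuallyEq.iteratedDeriv_eq m ?_
        filter_upwards [hmem] with y hy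
        simp only [hWt_def, hV_def]
        rw [if_pos (show y < a from hy)]
      rw [heqv, heqw]
      constructor
      · exact hvgen a _ hBa ⟨ha0, by linarith⟩
          (by rw [abs_le]; constructor <;> [linarith [hx.1]; linarith [hx.2]]) (hPaform j)
      · by_cases hm5 : m ≤ 5
        · have hform : (fun y => uhat y j - Pa j y) = fun y => uhat y j - ∑ ν ∈ Finset.range 5,
              (iteratedDeriv ν (fun z => uhat z j) a / (ν.factorial:ℝ)) * (y - a)^ν := by
            funext y
            simp only [hPa_def]
            congr 1
            exact Finset.sum_congr rfl fun ν _ => by ring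
          rw [hform]
          have hbd := taylor_layer (fun z => uhat z j) (hu j) a s (3*C₀*ε^(-(5:ℝ)/2)) hs0 hA0
            (h5left j) (5-m) m (by omega) x ⟨hx.1, hxa.le⟩
          exact hbd.trans ((hwfinal m hm5 x).trans (hwtail m x x (hB_lower1 x)))
        · have hm6 : m = 6 := by omega
          subst hm6
          rw [iter_sub6 _ _ 6 (hu j) (hPac j) le_rfl]
          have hp0 : iteratedDeriv 6 (fun y => Pa j y) x = 0 := by
            rw [hPaform j, iter_poly]
            exact Finset.sum_eq_zero fun ν hν => by
              rw [Nat.descFactorial_eq_zero_iff_lt.mpr (by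
                have := Finset.mem_range.mp hν; omega)]
              simp
          rw [hp0, sub_zero]
          have h := hubd 6 le_rfl j x hx
          have h1 : 1 ≤ ε ^ (-(2:ℝ)) * Bfun β ε x := honeB x (Or.inl hxa.le)
          have h2 : ε ^ (-(2:ℝ)) ≤ ε ^ (-((6:ℕ):ℝ)/2) := hmono_exp (by push_cast; norm_num)
          have hXB : 1 ≤ ε ^ (-((6:ℕ):ℝ)/2) * Bfun β ε x :=
            le_trans h1 (mul_le_mul_of_nonneg_right h2 (hB_pos x).le)
          refine h.trans ?_
          have hpos : (0:ℝ) ≤ ε ^ (-((6:ℕ):ℝ)/2) * Bfun β ε x := by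
            exact mul_nonneg (hrpos _).le (hB_pos x).le
          calc C₀ * (1 + ε ^ (-((6:ℕ):ℝ)/2) * Bfun β ε x)
              ≤ (2*C₀) * (ε ^ (-((6:ℕ):ℝ)/2) * Bfun β ε x) := by nlinarith [hC₀.le, hXB]
            _ ≤ (400*C₀*K) * (ε ^ (-((6:ℕ):ℝ)/2) * Bfun β ε x) := by
                refine mul_le_mul_of_nonneg_right ?_ hpos
                nlinarith [hC₀.le, hK1]
            _ = 400*C₀*K * ε ^ (-((6:ℕ):ℝ)/2) * Bfun β ε x := by ring
    · exact absurd hxa hne1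
    · rcases lt_trichotomy x b with hxb | hxb | hxb
      · -- interior region
        have hmem : Set.Ioo a b ∈ nhds x := Ioo_mem_nhds hxa hxb
        have heqv : iteratedDeriv m (fun z => V z j) x = iteratedDeriv m (fun y => uhat y j) x := by
          refine Filter.EventuallyEq.iteratedDeriv_eq m ?_
          filter_upwards [hmem] with y hy
          simp only [hV_def]
          rw [if_neg (not_lt.mpr (show a < y from hy.1).le), if_pos (show y < b from hy.2).le]
        have heqw : iteratedDeriv m (fun z => Wt z j) x
            = iteratedDeriv m (fun _ : ℝ => (0:ℝ)) x := by
          refine Filter.EventuallyEq.iteratedDeriv_eq m ?_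
          filter_upwards [hmem] with y hy
          simp only [hWt_def, hV_def]
          rw [if_neg (not_lt.mpr (show a < y from hy.1).le), if_pos (show y < b from hy.2).le, sub_self]
        rw [heqv, heqw]
        constructor
        · have h := hubd m hm j x hx
          have hBx : Bfun β ε x ≤ 2 * ε ^ (2:ℝ) := by
            rw [hBfun]
            have e1 : Real.exp (-(s*x)) ≤ ε ^ (2:ℝ) := by
              rw [← hEa]; exact hexp_mono hxa.le
            have e2 : Real.exp (-(s*(1-x))) ≤ ε ^ (2:ℝ) := by
              rw [← hEa]
              refine hexp_mono ?_
              rw [hb_def] at hxb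
              linarith
            linarith
          refine h.trans ?_
          have hkey : ε^(-(m:ℝ)/2) * Bfun β ε x ≤ 2*ε^((2:ℝ)-(m:ℝ)/2) := by
            calc ε^(-(m:ℝ)/2) * Bfun β ε x ≤ ε^(-(m:ℝ)/2)*(2*ε^(2:ℝ)) :=
                  mul_le_mul_of_nonneg_left hBx (hrpos _).le
              _ = 2*ε^((2:ℝ)-(m:ℝ)/2) := by
                  rw [show ε^(-(m:ℝ)/2)*(2*ε^(2:ℝ)) = 2*(ε^(-(m:ℝ)/2)*ε^(2:ℝ)) by ring,
                    ← Real.rpow_add hε0, show -(m:ℝ)/2 + 2 = (2:ℝ) - (m:ℝ)/2 by ring]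
          have hP : (0:ℝ) ≤ ε^((2:ℝ)-(m:ℝ)/2) := (hrpos _).le
          have h400 : (0:ℝ) ≤ 400*K - 2 := by linarith
          have h1P : (0:ℝ) ≤ 1 + ε^((2:ℝ)-(m:ℝ)/2) := by linarith
          calc C₀ * (1 + ε ^ (-(m:ℝ)/2) * Bfun β ε x)
              ≤ C₀ * (1 + 2*ε^((2:ℝ)-(m:ℝ)/2)) := by nlinarith [hC₀.le, hkey]
            _ ≤ (2*C₀) * (1 + ε^((2:ℝ)-(m:ℝ)/2)) := by nlinarith [hC₀.le, hP]
            _ ≤ 400*C₀*K * (1 + ε^((2:ℝ)-(m:ℝ)/2)) := by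
                nlinarith [mul_nonneg (mul_nonneg hC₀.le h400) h1P]
        · rw [iter_zero_fun]
          have : |(0:ℝ)| = 0 := abs_zero
          simp only [this]
          have : (0:ℝ) ≤ 400*C₀*K * ε ^ (-(m:ℝ)/2) * Bfun β ε x := by
            refine mul_nonneg (mul_nonneg ?_ (hrpos _).le) (hB_pos x).le
            positivity
          simpa using this
      · exact absurd hxb hne2
      · -- right layer region
        have hmem : Set.Ioi b ∈ nhds x := Ioi_mem_nhds hxb
        have heqv : iteratedDeriv m (fun z => V z j) x = iteratedDeriv m (fun y => Pb j y) x := by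
          refine Filter.EventuallyEq.iteratedDeriv_eq m ?_
          filter_upwards [hmem] with y hy
          simp only [hV_def]
          rw [if_neg (not_lt.mpr (le_trans hab (show b < y from hy).le)), if_neg (not_le.mpr (show b < y from hy))]
        have heqw : iteratedDeriv m (fun z => Wt z j) x
            = iteratedDeriv m (fun y => uhat y j - Pb j y) x := by
          refine Filter.EventuallyEq.iteratedDeriv_eq m ?_
          filter_upwards [hmem] with y hy
          simp only [hWt_def, hV_def]
          rw [if_neg (not_lt.mpr (le_trans hab (show b < y from hy).le)), if_neg (not_le.mpr (show b < y from hy))]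
        rw [heqv, heqw]
        have hxb' : x ≤ 1 := hx.2
        have hbge : (3:ℝ)/4 ≤ b := by rw [hb_def]; linarith
        constructor
        · exact hvgen b _ hBb ⟨by linarith, by rw [hb_def]; linarith⟩
            (by rw [abs_le]; constructor <;> [linarith [hx.1]; linarith]) (hPbform j)
        · by_cases hm5 : m ≤ 5
          · set g : ℝ → ℝ := fun y => uhat (1-y) j with hg_def
            have hg : ContDiff ℝ 6 g := (hu j).comp (contDiff_const.sub contDiff_id)
            have hgk : ∀ (k : ℕ) (t : ℝ), iteratedDeriv k g t
                = (-1:ℝ)^k * iteratedDeriv k (fun z => uhat z j) (1-t) := by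
              intro k t
              exact iter_comp_const_sub k (fun z => uhat z j) 1 t
            have h5g : ∀ t ∈ Set.Icc (0:ℝ) a, |iteratedDeriv 5 g t|
                ≤ (3*C₀*ε^(-(5:ℝ)/2)) * Real.exp (-(s*t)) := by
              intro t ht
              rw [hgk 5 t, abs_mul, abs_pow, abs_neg, abs_one, one_pow, one_mul]
              have h := hubd 5 (by norm_num) j (1-t) ⟨by linarith [ht.2], by linarith [ht.1]⟩
              push_cast at h
              rw [hBsym t] at h
              exact h.trans (hstep t ht)
            set W2 : ℝ → ℝ := fun z => g z - ∑ ν ∈ Finset.range 5,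
                (iteratedDeriv ν g a / (ν.factorial:ℝ)) * (z - a)^ν with hW2_def
            have hWrefl : (fun y => uhat y j - Pb j y) = fun y => W2 (1 - y) := by
              funext y
              simp only [hW2_def, hPb_def]
              simp only [hgk]
              simp only [hg_def]
              rw [show (1:ℝ) - (1 - y) = y by ring]
              congr 1
              rw [hb_def]
              refine Finset.sum_congr rfl fun ν _ => ?_
              rw [show (1:ℝ) - y - a = -(y - (1-a)) by ring,
                show (-(y - (1-a)))^ν = (-1:ℝ)^ν * (y - (1-a))^ν from neg_pow _ _]
              have h11 : (-1:ℝ)^ν * (-1:ℝ)^ν = 1 := by rw [← mul_pow]; norm_num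
              linear_combination (-((y - (1 - a))^ν
                * iteratedDeriv ν (fun z => uhat z j) (1 - a) / (ν.factorial : ℝ))) * h11
            rw [hWrefl]
            have hkey := iter_comp_const_sub m W2 1 x
            rw [hkey, abs_mul, abs_pow, abs_neg, abs_one, one_pow, one_mul]
            have hbd := taylor_layer g hg a s (3*C₀*ε^(-(5:ℝ)/2)) hs0 hA0 h5g
              (5-m) m (by omega) (1-x) ⟨by linarith, by rw [hb_def] at hxb; linarith⟩
            have htail : Real.exp (-(s*(1-x))) ≤ Bfun β ε x := hB_lower2 x
            exact hbd.trans ((hwfinal m hm5 (1-x)).trans (hwtail m (1-x) x htail))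
          · have hm6 : m = 6 := by omega
            subst hm6
            rw [iter_sub6 _ _ 6 (hu j) (hPbc j) le_rfl]
            have hp0 : iteratedDeriv 6 (fun y => Pb j y) x = 0 := by
              rw [hPbform j, iter_poly]
              exact Finset.sum_eq_zero fun ν hν => by
                rw [Nat.descFactorial_eq_zero_iff_lt.mpr (by
                  have := Finset.mem_range.mp hν; omega)]
                simp
            rw [hp0, sub_zero]
            have h := hubd 6 le_rfl j x hx
            have h1 : 1 ≤ ε ^ (-(2:ℝ)) * Bfun β ε x := honeB x (Or.inr (by
              rw [hb_def] at hxb; linarith))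
            have h2 : ε ^ (-(2:ℝ)) ≤ ε ^ (-((6:ℕ):ℝ)/2) := hmono_exp (by push_cast; norm_num)
            have hXB : 1 ≤ ε ^ (-((6:ℕ):ℝ)/2) * Bfun β ε x :=
              le_trans h1 (mul_le_mul_of_nonneg_right h2 (hB_pos x).le)
            refine h.trans ?_
            have hpos : (0:ℝ) ≤ ε ^ (-((6:ℕ):ℝ)/2) * Bfun β ε x :=
              mul_nonneg (hrpos _).le (hB_pos x).le
            calc C₀ * (1 + ε ^ (-((6:ℕ):ℝ)/2) * Bfun β ε x)
                ≤ (2*C₀) * (ε ^ (-((6:ℕ):ℝ)/2) * Bfun β ε x) := by nlinarith [hC₀.le, hXB]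
              _ ≤ (400*C₀*K) * (ε ^ (-((6:ℕ):ℝ)/2) * Bfun β ε x) := by
                  refine mul_le_mul_of_nonneg_right ?_ hpos
                  nlinarith [hC₀.le, hK1]
              _ = 400*C₀*K * ε ^ (-((6:ℕ):ℝ)/2) * Bfun β ε x := by ring
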